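/- Let n ≥ 1, λ > 0 and c₁ < 0 < c₂. Define h : ℝⁿ → (-∞,+∞] by h(x) = λ·(number of nonzero entries of x) if c₁ ≤ x_i ≤ c₂ for all i, and h(x) = +∞ otherwise. Then the conjugate function h*(y) = sup_x (⟨y, x⟩ - h(x)) is given by h*(y) = ∑_{i=1}^n φ(y_i), where φ(t) = c₂ t - λ if t > λ/c₂, φ(t) = 0 if λ/c₁ < t ≤ λ/c₂, and φ(t) = c₁ t - λ if t ≤ λ/c₁. -/

import Mathlib

open RealInnerProductSpace

noncomputable section

-- The ℓ₀-type function `h(x) = λ‖x‖₀` on the box `{x : c₁ ≤ xᵢ ≤ c₂}`, `+∞` outside.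
open Classical in
def ellZero (n : ℕ) (lam c₁ c₂ : ℝ) (x : EuclideanSpace ℝ (Fin n)) : EReal :=
  if ∀ i, c₁ ≤ x i ∧ x i ≤ c₂ then
    ((lam * (({i : Fin n | x i ≠ 0} : Set (Fin n)).ncard : ℝ) : ℝ) : EReal)
  else ⊤

/-- The claimed one-dimensional conjugate piece `φ`. -/
def ellZeroConjPiece (lam c₁ c₂ t : ℝ) : ℝ :=
  if lam / c₂ < t then c₂ * t - lam
  else if lam / c₁ < t then 0
  else c₁ * t - lam

open Classical in
lemma piece_bound (lam c₁ c₂ : ℝ) (hlam : 0 < lam) (hc₁ : c₁ < 0) (hc₂ : 0 < c₂)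
    (t x : ℝ) (h1 : c₁ ≤ x) (h2 : x ≤ c₂) :
    t * x - (if x ≠ 0 then lam else 0) ≤ ellZeroConjPiece lam c₁ c₂ t := by
  unfold ellZeroConjPiece
  by_cases hx : x = 0
  · simp [hx]
    split_ifs with h h'
    · have := (div_lt_iff₀ hc₂).mp h; nlinarith
    · linarith
    · rw [not_lt] at h'
      have := (le_div_iff_of_neg hc₁).mp h'
      nlinarith
  · simp [hx]
    split_ifs with h h'
    · have h3 := (div_lt_iff₀ hc₂).mp h
      have ht : 0 < t := by nlinarith
      nlinarith [mul_le_mul_of_nonneg_left h2 ht.le]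
    · have h3 := (div_lt_iff_of_neg hc₁).mp h'
      rw [not_lt] at h
      have h4 := (le_div_iff₀ hc₂).mp h
      rcases le_or_gt 0 t with ht | ht
      · nlinarith [mul_le_mul_of_nonneg_left h2 ht]
      · nlinarith [mul_le_mul_of_nonpos_left h1 ht.le]
    · rw [not_lt] at h'
      have h3 := (le_div_iff_of_neg hc₁).mp h'
      have ht : t < 0 := by nlinarith
      nlinarith [mul_le_mul_of_nonpos_left h1 ht.le]

open Classical in
lemma piece_eq (lam c₁ c₂ : ℝ) (hlam : 0 < lam) (hc₁ : c₁ < 0) (hc₂ : 0 < c₂) (t : ℝ) :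
    t * (if lam / c₂ < t then c₂ else if lam / c₁ < t then 0 else c₁)
      - (if (if lam / c₂ < t then c₂ else if lam / c₁ < t then 0 else c₁) ≠ 0 then lam else 0)
      = ellZeroConjPiece lam c₁ c₂ t := by
  unfold ellZeroConjPiece
  by_cases h : lam / c₂ < t
  · simp only [if_pos h, ne_eq, hc₂.ne', not_false_iff, if_true]
    ring
  · by_cases h' : lam / c₁ < t
    · simp [h, h']
    · simp only [if_neg h, if_neg h', ne_eq, hc₁.ne, not_false_iff, if_true]
      ring

/-- the conjugate of the constrained ℓ₀ function is the sum of the explicit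
one-dimensional pieces `φ(yᵢ)`. -/
theorem stmt19 (n : ℕ) (hn : 1 ≤ n) (lam c₁ c₂ : ℝ) (hlam : 0 < lam)
    (hc₁ : c₁ < 0) (hc₂ : 0 < c₂) (y : EuclideanSpace ℝ (Fin n)) :
    (⨆ x : EuclideanSpace ℝ (Fin n),
        (((⟪y, x⟫ : ℝ) : EReal) - ellZero n lam c₁ c₂ x))
      = ((∑ i, ellZeroConjPiece lam c₁ c₂ (y i) : ℝ) : EReal) := by
  classical
  have inner_eq : ∀ x : EuclideanSpace ℝ (Fin n), (⟪y, x⟫ : ℝ) = ∑ i, y i * x i := by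
    intro x
    simp [PiLp.inner_apply, RCLike.inner_apply, conj_trivial]
    exact Finset.sum_congr rfl fun i _ => mul_comm _ _
  have card_eq : ∀ x : EuclideanSpace ℝ (Fin n),
      lam * (({i : Fin n | x i ≠ 0} : Set (Fin n)).ncard : ℝ)
        = ∑ i, (if x i ≠ 0 then lam else 0) := by
    intro x
    have h1 : ({i : Fin n | x i ≠ 0} : Set (Fin n)).ncard
        = (Finset.univ.filter (fun i => x i ≠ 0)).card := by
      rw [Set.ncard_eq_toFinset_card']
      congr 1
      ext i
      simp
    rw [h1, ← Finset.sum_filter, Finset.sum_const, nsmul_eq_mul, mul_comm]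
  apply le_antisymm
  · apply iSup_le
    intro x
    unfold ellZero
    split_ifs with hbox
    · rw [← EReal.coe_sub, EReal.coe_le_coe_iff]
      rw [inner_eq x, card_eq x, ← Finset.sum_sub_distrib]
      exact Finset.sum_le_sum fun i _ =>
        piece_bound lam c₁ c₂ hlam hc₁ hc₂ (y i) (x i) (hbox i).1 (hbox i).2
    · simp
  · set x₀ : EuclideanSpace ℝ (Fin n) :=
      WithLp.toLp 2 (fun i => if lam / c₂ < y i then c₂ else if lam / c₁ < y i then 0 else c₁) with hx₀
    have hbox : ∀ i, c₁ ≤ x₀ i ∧ x₀ i ≤ c₂ := by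
      intro i
      simp only [hx₀, WithLp.ofLp_toLp]
      split_ifs <;> constructor <;> linarith
    have hval : (((⟪y, x₀⟫ : ℝ) : EReal) - ellZero n lam c₁ c₂ x₀)
        = ((∑ i, ellZeroConjPiece lam c₁ c₂ (y i) : ℝ) : EReal) := by
      unfold ellZero
      rw [if_pos hbox, ← EReal.coe_sub, EReal.coe_eq_coe_iff]
      rw [inner_eq x₀, card_eq x₀, ← Finset.sum_sub_distrib]
      apply Finset.sum_congr rfl
      intro i _
      exact piece_eq lam c₁ c₂ hlam hc₁ hc₂ (y i)
    calc ((∑ i, ellZeroConjPiece lam c₁ c₂ (y i) : ℝ) : EReal)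
        = (((⟪y, x₀⟫ : ℝ) : EReal) - ellZero n lam c₁ c₂ x₀) := hval.symm
      _ ≤ _ := le_iSup (fun x : EuclideanSpace ℝ (Fin n) => (((⟪y, x⟫ : ℝ) : EReal) - ellZero n lam c₁ c₂ x)) x₀
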